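/- For every integer t ≥ 2 there is a constant C_t such that for all n, the fractional local t-dimension of the n-element chain is at least (ln n)/(ln t + 1/2) − C_t. In particular it is at least log base (√e · t) of n minus (2 − 2γ)/(2 ln t + 1), where γ is Euler's constant. -/

import Mathlib

open Classical Finset Real
open scoped Classical

noncomputable section

/-- A monotone partial function from `P` to the `t`-element chain,
encoded as a function into `Option (Fin t)` (`none` = outside the domain). -/
def MonotonePartial {P : Type*} [PartialOrder P] {t : ℕ} (f : P → Option (Fin t)) : Prop :=
  ∀ ⦃x y : P⦄, x ≤ y → ∀ ⦃a b : Fin t⦄, f x = some a → f y = some b → a ≤ b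

/-- `f` separates the pair `(x, y)`: both are in the domain and `f x < f y`. -/
def Separates {P : Type*} {t : ℕ} (f : P → Option (Fin t)) (x y : P) : Prop :=
  ∃ a b : Fin t, f x = some a ∧ f y = some b ∧ a < b

/-- A local `t`-realiser: a set of monotone partial functions into the `t`-chain
separating every pair `x ≱ y`. -/
def IsLocalRealiser {P : Type*} [PartialOrder P] {t : ℕ}
    (L : Finset (P → Option (Fin t))) : Prop :=
  (∀ f ∈ L, MonotonePartial f) ∧ ∀ x y : P, ¬ y ≤ x → ∃ f ∈ L, Separates f x y

/-- The multiplicity of `x` in `L`: the number of members of `L` whose domain contains `x`. -/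
def mult {P : Type*} {t : ℕ} (L : Finset (P → Option (Fin t))) (x : P) : ℕ :=
  (L.filter fun f => (f x).isSome).card

/-- The local `t`-dimension: minimal possible maximum multiplicity of a local `t`-realiser. -/
def ltdim (t : ℕ) (P : Type*) [PartialOrder P] : ℕ :=
  sInf {d | ∃ L : Finset (P → Option (Fin t)), IsLocalRealiser L ∧ ∀ x, mult L x ≤ d}

/-- The fractional `t`-dimension: minimal total weight of a nonnegative weighting of
monotone total functions `P → Fin t` separating every pair `x ≱ y` with weight at least 1. -/
def ftdim (t : ℕ) (P : Type*) [PartialOrder P] [Fintype P] [DecidableEq P] : ℝ :=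
  sInf {s : ℝ | ∃ w : (P → Fin t) → ℝ,
    (∀ f, 0 ≤ w f) ∧ (∀ f, ¬ Monotone f → w f = 0) ∧
    (∀ x y : P, ¬ y ≤ x → 1 ≤ ∑ f : P → Fin t, if f x < f y then w f else 0) ∧
    s = ∑ f : P → Fin t, w f}

/-- The fractional local `t`-dimension: minimal possible maximum (over points `x`) of the
total weight of monotone partial functions whose domain contains `x`, over nonnegative
weightings of monotone partial functions separating every pair `x ≱ y` with weight ≥ 1. -/
def fltdim (t : ℕ) (P : Type*) [PartialOrder P] [Fintype P] [DecidableEq P] : ℝ :=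
  sInf {s : ℝ | ∃ w : (P → Option (Fin t)) → ℝ,
    (∀ f, 0 ≤ w f) ∧ (∀ f, ¬ MonotonePartial f → w f = 0) ∧
    (∀ x y : P, ¬ y ≤ x →
      1 ≤ ∑ f : P → Option (Fin t), if Separates f x y then w f else 0) ∧
    ∀ x : P, (∑ f : P → Option (Fin t), if (f x).isSome then w f else 0) ≤ s}

lemma FLT_harmonic_real (j : ℕ) : (harmonic j : ℝ) = ∑ i ∈ Finset.range j, (1:ℝ)/((i:ℝ)+1) := by
  rw [harmonic]
  push_cast
  simp [one_div]

lemma FLT_hsum_eq (j : ℕ) :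
    ∑ i ∈ Finset.range j, (1:ℝ)/((j:ℝ) - (i:ℝ)) = (harmonic j : ℝ) := by
  rw [FLT_harmonic_real, ← Finset.sum_range_reflect]
  refine Finset.sum_congr rfl fun i hi => ?_
  have hi' := Finset.mem_range.mp hi
  congr 1
  have h1 : (j - 1 - i : ℕ) = j - (i+1) := by omega
  rw [h1, Nat.cast_sub (by omega : i + 1 ≤ j)]
  push_cast
  ring

lemma FLT_sum_harmonic (m : ℕ) :
    ∑ j ∈ Finset.range m, (harmonic j : ℝ) = m * (harmonic m : ℝ) - m := by
  induction m with
  | zero => simp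
  | succ m ih =>
    rw [Finset.sum_range_succ, ih, harmonic_succ]
    push_cast
    have : ((m:ℝ)+1) ≠ 0 := by positivity
    field_simp
    ring

lemma FLT_dcl (s : Finset ℕ) (h : ∀ j ∈ s, ∀ i, i ≤ j → i ∈ s) (i : ℕ) :
    i ∈ s ↔ i < s.card := by
  constructor
  · intro hi
    by_contra hlt
    push_neg at hlt
    have hsub : Finset.range (i+1) ⊆ s := by
      intro x hx
      exact h i hi x (Nat.lt_succ_iff.mp (Finset.mem_range.mp hx))
    have := Finset.card_le_card hsub
    simp at this
    omega
  · intro hi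
    by_contra hi'
    have hsub : s ⊆ Finset.range i := by
      intro j hj
      rw [Finset.mem_range]
      by_contra hji
      push_neg at hji
      exact hi' (h j hj i hji)
    have := Finset.card_le_card hsub
    simp at this
    omega

lemma FLT_log_half (m : ℕ) (hm : 1 ≤ m) :
    Real.log m + 1/2 ≤ (harmonic m : ℝ) := by
  have h1 := Real.one_half_lt_eulerMascheroniConstant
  have h2 := Real.eulerMascheroniConstant_lt_eulerMascheroniSeq' m
  rw [Real.eulerMascheroniSeq', if_neg (by omega)] at h2
  linarith

lemma FLT_gamma_lt (m : ℕ) (hm : 1 ≤ m) :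
    Real.eulerMascheroniConstant < (harmonic m : ℝ) - Real.log m := by
  have h2 := Real.eulerMascheroniConstant_lt_eulerMascheroniSeq' m
  rwa [Real.eulerMascheroniSeq', if_neg (by omega)] at h2

lemma FLT_jensen (t k : ℕ) (ht : 1 ≤ t) (hk : 1 ≤ k) (m : ℕ → ℕ)
    (hsum : ∑ a ∈ Finset.range t, (m a : ℝ) = k) :
    (k:ℝ) * Real.log k - k * Real.log t ≤ ∑ a ∈ Finset.range t, (m a : ℝ) * Real.log (m a) := by
  have ht0 : (0:ℝ) < t := by exact_mod_cast ht
  have hk0 : (0:ℝ) < k := by exact_mod_cast hk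
  have key : ∀ a ∈ Finset.range t,
      (m a : ℝ) * (Real.log k - Real.log t) + (m a : ℝ) - (k:ℝ)/t
        ≤ (m a : ℝ) * Real.log (m a) := by
    intro a _
    rcases Nat.eq_zero_or_pos (m a) with h0 | h1
    · rw [h0]
      simp
      positivity
    · have hm0 : (0:ℝ) < m a := by exact_mod_cast h1
      have h2 : Real.log ((k:ℝ)/((t:ℝ) * m a)) ≤ (k:ℝ)/((t:ℝ)*m a) - 1 :=
        Real.log_le_sub_one_of_pos (by positivity)
      rw [Real.log_div (ne_of_gt hk0) (by positivity),
        Real.log_mul (ne_of_gt ht0) (ne_of_gt hm0)] at h2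
      have h3 := mul_le_mul_of_nonneg_left h2 (le_of_lt hm0)
      have hrw : (m a : ℝ) * ((k:ℝ)/((t:ℝ) * m a) - 1) = (k:ℝ)/t - m a := by
        field_simp
      rw [hrw] at h3
      nlinarith
  have hs := Finset.sum_le_sum key
  rw [Finset.sum_sub_distrib, Finset.sum_add_distrib, ← Finset.sum_mul, hsum,
    Finset.sum_const, Finset.card_range, nsmul_eq_mul] at hs
  have : (t:ℝ) * ((k:ℝ)/t) = k := by field_simp
  nlinarith

lemma FLT_range_ite_sum (nn j : ℕ) (hj : j ≤ nn) (g : ℕ → ℝ) :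
    ∑ i ∈ Finset.range nn, (if i < j then g i else 0) = ∑ i ∈ Finset.range j, g i := by
  rw [← Finset.sum_filter]
  congr 1
  ext i
  simp only [Finset.mem_filter, Finset.mem_range]
  omega

lemma FLT_sum_pairs (n : ℕ) (R : ℕ → ℕ → Prop) (g : ℕ → ℕ → ℝ)
    [inst : DecidablePred fun p : ℕ × ℕ => p.1 < p.2 ∧ R p.1 p.2]
    [inst2 : ∀ i j, Decidable (R i j)] :
    ∑ p ∈ ((Finset.range n) ×ˢ (Finset.range n)).filter (fun p => p.1 < p.2 ∧ R p.1 p.2),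
        g p.1 p.2
      = ∑ j ∈ Finset.range n, ∑ i ∈ Finset.range j, (if R i j then g i j else 0) := by
  classical
  rw [Finset.sum_filter, Finset.sum_product]
  rw [Finset.sum_comm]
  refine Finset.sum_congr rfl fun j hj => ?_
  have hj' := Finset.mem_range.mp hj
  rw [← Finset.sum_filter, ← Finset.sum_filter]
  congr 1
  ext i
  simp only [Finset.mem_filter, Finset.mem_range]
  constructor
  · rintro ⟨h1, h2, h3⟩; exact ⟨h2, h3⟩
  · rintro ⟨h1, h2⟩; exact ⟨by omega, h1, h2⟩

lemma FLT_mono_diff (k : ℕ) (g : ℕ → ℕ) (hg : ∀ a b, a < b → b < k → g a < g b) :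
    ∀ i j, i < j → j < k → j - i ≤ g j - g i := by
  have key : ∀ d i, i + d < k → g i + d ≤ g (i + d) := by
    intro d
    induction d with
    | zero => intro i _; simp
    | succ d ih =>
      intro i h
      have h1 := ih i (by omega)
      have h2 : g (i+d) < g (i+d+1) := hg _ _ (by omega) (by omega)
      have h3 : g (i + (d+1)) = g (i+d+1) := by rw [← Nat.add_assoc]
      rw [h3]
      omega
  intro i j hij hjk
  have := key (j - i) i (by omega)
  have h2 : i + (j - i) = j := by omega
  rw [h2] at this
  omega


lemma FLT_keyG (t k : ℕ) (ht : 1 ≤ t) (ℓ : ℕ → ℕ)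
    (hmono : ∀ i j, i ≤ j → j < k → ℓ i ≤ ℓ j)
    (hlt : ∀ i, i < k → ℓ i < t) :
    ∑ j ∈ Finset.range k, ∑ i ∈ Finset.range j,
        (if ℓ i < ℓ j then (1:ℝ)/((j:ℝ) - (i:ℝ)) else 0)
      ≤ (k:ℝ) * (Real.log t + 1/2) := by
  rcases Nat.eq_zero_or_pos k with rfl | hk
  · simp
  set c : ℕ → ℕ := fun b => ((Finset.range k).filter (fun i => ℓ i < b)).card with hc_def
  have hc : ∀ b i, i < k → (ℓ i < b ↔ i < c b) := by
    intro b i hik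
    have hdc : ∀ j ∈ (Finset.range k).filter (fun i => ℓ i < b), ∀ i', i' ≤ j →
        i' ∈ (Finset.range k).filter (fun i => ℓ i < b) := by
      intro j hj i' hij
      simp only [Finset.mem_filter, Finset.mem_range] at hj ⊢
      exact ⟨lt_of_le_of_lt hij hj.1, lt_of_le_of_lt (hmono i' j hij hj.1) hj.2⟩
    have hmem := FLT_dcl _ hdc i
    simp only [Finset.mem_filter, Finset.mem_range] at hmem
    constructor
    · intro h; exact hmem.mp ⟨hik, h⟩
    · intro h; exact (hmem.mpr h).2
  have hck : ∀ b, c b ≤ k := fun b => le_trans (Finset.card_filter_le _ _) (by simp)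
  have hmono_c : ∀ a, c a ≤ c (a+1) := by
    intro a
    apply Finset.card_le_card
    intro i hi
    simp only [Finset.mem_filter, Finset.mem_range] at hi ⊢
    omega
  have hc0 : c 0 = 0 := by simp [hc_def]
  have hct : c t = k := by
    have h1 : (Finset.range k).filter (fun i => ℓ i < t) = Finset.range k :=
      Finset.filter_true_of_mem (fun i hi => hlt i (Finset.mem_range.mp hi))
    rw [hc_def]
    simp only [h1, Finset.card_range]
  set m : ℕ → ℕ := fun a => c (a+1) - c a with hm_def
  have hmcast : ∀ a, (m a : ℝ) = (c (a+1) : ℝ) - c a := fun a => by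
    rw [hm_def]
    push_cast [Nat.cast_sub (hmono_c a)]
    ring
  have hmsum : ∑ a ∈ Finset.range t, (m a : ℝ) = k := by
    have := Finset.sum_range_sub (fun b => (c b : ℝ)) t
    simp only [hmcast]
    rw [this, hc0, hct]
    simp
  have hchar : ∀ a i, i < k → (ℓ i = a ↔ (c a ≤ i ∧ i < c (a+1))) := by
    intro a i hik
    have h1 := hc a i hik
    have h2 := hc (a+1) i hik
    omega
  have heq1 : ∑ j ∈ Finset.range k, ∑ i ∈ Finset.range j,
        (if ℓ i < ℓ j then (1:ℝ)/((j:ℝ) - i) else 0)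
      = (∑ j ∈ Finset.range k, ∑ i ∈ Finset.range j, (1:ℝ)/((j:ℝ) - i))
        - ∑ j ∈ Finset.range k, ∑ i ∈ Finset.range j,
            (if ℓ i = ℓ j then (1:ℝ)/((j:ℝ) - i) else 0) := by
    rw [← Finset.sum_sub_distrib]
    refine Finset.sum_congr rfl fun j hj => ?_
    rw [← Finset.sum_sub_distrib]
    refine Finset.sum_congr rfl fun i hi => ?_
    have hle : ℓ i ≤ ℓ j :=
      hmono i j (le_of_lt (Finset.mem_range.mp hi)) (Finset.mem_range.mp hj)
    rcases eq_or_lt_of_le hle with h | h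
    · rw [if_neg (by omega), if_pos h]
      ring
    · rw [if_pos h, if_neg (by omega)]
      ring
  have htot : ∑ j ∈ Finset.range k, ∑ i ∈ Finset.range j, (1:ℝ)/((j:ℝ) - i)
      = k * (harmonic k : ℝ) - k := by
    calc ∑ j ∈ Finset.range k, ∑ i ∈ Finset.range j, (1:ℝ)/((j:ℝ) - i)
        = ∑ j ∈ Finset.range k, (harmonic j : ℝ) :=
          Finset.sum_congr rfl fun j _ => FLT_hsum_eq j
      _ = k * (harmonic k : ℝ) - k := FLT_sum_harmonic k
  have hwithin : ∑ j ∈ Finset.range k, ∑ i ∈ Finset.range j,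
        (if ℓ i = ℓ j then (1:ℝ)/((j:ℝ) - i) else 0)
      = ∑ a ∈ Finset.range t, ((m a : ℝ) * (harmonic (m a) : ℝ) - (m a : ℝ)) := by
    have step1 : ∀ j ∈ Finset.range k, ∀ i ∈ Finset.range j,
        (if ℓ i = ℓ j then (1:ℝ)/((j:ℝ) - i) else 0)
          = ∑ a ∈ Finset.range t, (if ℓ j = a ∧ ℓ i = a then (1:ℝ)/((j:ℝ) - i) else 0) := by
      intro j hj i hi
      have hjk := Finset.mem_range.mp hj
      rcases eq_or_ne (ℓ i) (ℓ j) with h | h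
      · rw [if_pos h]
        have hcongr : ∀ a ∈ Finset.range t,
            (if ℓ j = a ∧ ℓ i = a then (1:ℝ)/((j:ℝ) - i) else 0)
              = (if a = ℓ j then (1:ℝ)/((j:ℝ) - i) else 0) := by
          intro a _
          refine if_congr ?_ rfl rfl
          constructor
          · intro hh; omega
          · intro hh; omega
        rw [Finset.sum_congr rfl hcongr, Finset.sum_ite_eq' (Finset.range t) (ℓ j)]
        rw [if_pos (Finset.mem_range.mpr (hlt j hjk))]
      · rw [if_neg h]
        symm
        apply Finset.sum_eq_zero
        intro a _
        rw [if_neg (by omega)]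
    rw [Finset.sum_congr rfl (fun j hj => Finset.sum_congr rfl (step1 j hj))]
    rw [Finset.sum_congr rfl (fun j _ => Finset.sum_comm), Finset.sum_comm]
    refine Finset.sum_congr rfl fun a _ => ?_
    -- W_a computation
    have hqk : c (a+1) ≤ k := hck _
    have hpq : c a ≤ c (a+1) := hmono_c a
    have houter : ∀ j ∈ Finset.range k,
        (∑ i ∈ Finset.range j, if ℓ j = a ∧ ℓ i = a then (1:ℝ)/((j:ℝ) - i) else 0)
          = if c a ≤ j ∧ j < c (a+1) then
              (∑ i ∈ Finset.range j, if c a ≤ i then (1:ℝ)/((j:ℝ) - i) else 0) else 0 := by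
      intro j hj
      have hjk := Finset.mem_range.mp hj
      by_cases hja : ℓ j = a
      · rw [if_pos ((hchar a j hjk).mp hja)]
        refine Finset.sum_congr rfl fun i hi => ?_
        have hij := Finset.mem_range.mp hi
        have hik : i < k := lt_trans hij hjk
        have hiq : i < c (a+1) := lt_of_lt_of_le hij (le_of_lt ((hchar a j hjk).mp hja).2)
        refine if_congr ?_ rfl rfl
        have h2 := hchar a i hik
        constructor
        · intro hh; exact (h2.mp hh.2).1
        · intro hh; exact ⟨hja, h2.mpr ⟨hh, hiq⟩⟩
      · rw [if_neg (fun hcon => hja ((hchar a j hjk).mpr hcon))]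
        apply Finset.sum_eq_zero
        intro i _
        rw [if_neg (fun hh => hja hh.1)]
    rw [Finset.sum_congr rfl houter]
    have hIco : ((Finset.range k).filter fun j => c a ≤ j ∧ j < c (a+1))
        = Finset.Ico (c a) (c (a+1)) := by
      ext j
      simp only [Finset.mem_filter, Finset.mem_range, Finset.mem_Ico]
      omega
    rw [← Finset.sum_filter, hIco]
    have hinner : ∀ j ∈ Finset.Ico (c a) (c (a+1)),
        (∑ i ∈ Finset.range j, if c a ≤ i then (1:ℝ)/((j:ℝ) - i) else 0)
          = (harmonic (j - c a) : ℝ) := by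
      intro j hj
      obtain ⟨hpj, hjq⟩ := Finset.mem_Ico.mp hj
      have h1 : ((Finset.range j).filter fun i => c a ≤ i) = Finset.Ico (c a) j := by
        ext i
        simp only [Finset.mem_filter, Finset.mem_range, Finset.mem_Ico]
        omega
      rw [← Finset.sum_filter, h1, Finset.sum_Ico_eq_sum_range, ← FLT_hsum_eq (j - c a)]
      refine Finset.sum_congr rfl fun i hi => ?_
      congr 1
      rw [Nat.cast_sub hpj]
      push_cast
      ring
    rw [Finset.sum_congr rfl hinner, Finset.sum_Ico_eq_sum_range]
    have h2 : ∀ i ∈ Finset.range (c (a+1) - c a),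
        (harmonic (c a + i - c a) : ℝ) = (harmonic i : ℝ) := by
      intro i _
      have h3 : c a + i - c a = i := by omega
      rw [h3]
    rw [Finset.sum_congr rfl h2, FLT_sum_harmonic]
  rw [heq1, htot, hwithin]
  have hk1 : 1 ≤ k := hk
  have hup : (k:ℝ) * (harmonic k : ℝ) ≤ (k:ℝ) * Real.log k + k := by
    have h1 := harmonic_le_one_add_log k
    have hk0 : (0:ℝ) ≤ k := by positivity
    nlinarith
  have hlow : ∀ a ∈ Finset.range t,
      (m a : ℝ) * Real.log (m a) + (m a : ℝ)/2 ≤ (m a : ℝ) * (harmonic (m a) : ℝ) := by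
    intro a _
    rcases Nat.eq_zero_or_pos (m a) with h0 | h1
    · rw [h0]; simp
    · have h2 := FLT_log_half (m a) h1
      have h3 : (0:ℝ) ≤ m a := by positivity
      nlinarith
  have hsum_low : (∑ a ∈ Finset.range t, (m a : ℝ) * Real.log (m a)) + (k:ℝ)/2
      ≤ ∑ a ∈ Finset.range t, (m a : ℝ) * (harmonic (m a) : ℝ) := by
    have h4 := Finset.sum_le_sum hlow
    rw [Finset.sum_add_distrib] at h4
    have h5 : ∑ a ∈ Finset.range t, (m a : ℝ)/2 = (k:ℝ)/2 := by
      rw [← Finset.sum_div, hmsum]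
    rw [h5] at h4
    exact h4
  have hjen := FLT_jensen t k ht hk1 m hmsum
  have hsub : ∑ a ∈ Finset.range t, ((m a : ℝ) * (harmonic (m a) : ℝ) - (m a : ℝ))
      = (∑ a ∈ Finset.range t, (m a : ℝ) * (harmonic (m a) : ℝ)) - k := by
    rw [Finset.sum_sub_distrib, hmsum]
  rw [hsub]
  have hklog : (k:ℝ) * (Real.log t + 1/2) = k * Real.log t + k/2 := by ring
  linarith

lemma FLT_sepSum_le (n t : ℕ) (ht : 2 ≤ t) (f : Fin n → Option (Fin t))
    (hf : MonotonePartial f) :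
    ∑ p ∈ ((Finset.univ : Finset (Fin n)) ×ˢ Finset.univ).filter
        (fun p => p.1 < p.2 ∧ Separates f p.1 p.2),
        (1:ℝ)/(((p.2 : Fin n) : ℕ) - (((p.1 : Fin n) : ℕ) : ℝ))
      ≤ ((Finset.univ.filter fun x => (f x).isSome).card : ℝ) * (Real.log t + 1/2) := by
  classical
  set D := (Finset.univ.filter fun x : Fin n => (f x).isSome) with hD
  set k := D.card with hk
  rcases Nat.eq_zero_or_pos k with hk0 | hk1
  · have hempty : ((Finset.univ : Finset (Fin n)) ×ˢ Finset.univ).filter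
        (fun p : Fin n × Fin n => p.1 < p.2 ∧ Separates f p.1 p.2) = ∅ := by
      rw [Finset.filter_eq_empty_iff]
      rintro p -
      rintro ⟨-, a, b, ha, hb, -⟩
      have hmem : p.1 ∈ D := by
        simp only [hD, Finset.mem_filter, Finset.mem_univ, true_and, ha, Option.isSome_some]
      have := Finset.card_pos.mpr ⟨p.1, hmem⟩
      omega
    rw [hempty, hk0]
    simp
  · have htpos : 0 < t := by omega
    set σ := D.orderIsoOfFin hk.symm with hσ
    obtain ⟨x₀, hx₀⟩ := Finset.card_pos.mp hk1
    set E : ℕ → Fin n := fun i => if h : i < k then (σ ⟨i, h⟩ : Fin n) else x₀ with hE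
    have hED : ∀ i (h : i < k), E i ∈ D := by
      intro i h
      simp only [hE, dif_pos h]
      exact (σ ⟨i, h⟩).2
    have hEmono : ∀ i j, i < j → j < k → E i < E j := by
      intro i j hij hj
      have hi : i < k := lt_trans hij hj
      simp only [hE, dif_pos hi, dif_pos hj]
      have h1 : (⟨i, hi⟩ : Fin k) < ⟨j, hj⟩ := by
        rw [Fin.mk_lt_mk]; exact hij
      exact σ.lt_iff_lt.mpr h1
    set d₀ : Fin t := ⟨0, htpos⟩ with hd₀
    set ℓ : ℕ → ℕ := fun i => (((f (E i)).getD d₀ : Fin t) : ℕ) with hℓ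
    have hℓlt : ∀ i, i < k → ℓ i < t := fun i _ => ((f (E i)).getD d₀).isLt
    have hsome : ∀ i, i < k → (f (E i)).isSome := by
      intro i h
      have := hED i h
      simp only [hD, Finset.mem_filter, Finset.mem_univ, true_and] at this
      exact this
    have hval : ∀ i (a : Fin t), f (E i) = some a → ℓ i = (a : ℕ) := by
      intro i a ha
      simp [hℓ, ha]
    have hℓmono : ∀ i j, i ≤ j → j < k → ℓ i ≤ ℓ j := by
      intro i j hij hj
      have hi := lt_of_le_of_lt hij hj
      obtain ⟨a, ha⟩ := Option.isSome_iff_exists.mp (hsome i hi)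
      obtain ⟨b, hb⟩ := Option.isSome_iff_exists.mp (hsome j hj)
      have hle : E i ≤ E j := by
        rcases eq_or_lt_of_le hij with rfl | h
        · exact le_refl _
        · exact le_of_lt (hEmono i j h hj)
      have hab := hf hle ha hb
      rw [hval i a ha, hval j b hb]
      exact hab
    have hidx : ∀ x, x ∈ D → ∃ i, i < k ∧ E i = x := by
      intro x hx
      refine ⟨(σ.symm ⟨x, hx⟩ : Fin k), (σ.symm ⟨x, hx⟩).isLt, ?_⟩
      simp only [hE, dif_pos (σ.symm ⟨x, hx⟩).isLt]
      have : (⟨((σ.symm ⟨x, hx⟩ : Fin k) : ℕ), (σ.symm ⟨x, hx⟩).isLt⟩ : Fin k)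
          = σ.symm ⟨x, hx⟩ := by
        apply Fin.ext
        rfl
      rw [this, OrderIso.apply_symm_apply]
    have hEinj : ∀ i j, i < k → j < k → E i = E j → i = j := by
      intro i j hi hj hij
      by_contra hne
      rcases Nat.lt_or_ge i j with h | h
      · exact absurd hij (ne_of_lt (hEmono i j h hj))
      · have : j < i := by omega
        exact absurd hij.symm (ne_of_lt (hEmono j i this hi))
    -- sum equality via bijection
    have hbij : ∑ p ∈ ((Finset.univ : Finset (Fin n)) ×ˢ Finset.univ).filter
          (fun p => p.1 < p.2 ∧ Separates f p.1 p.2),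
          (1:ℝ)/(((p.2 : Fin n) : ℕ) - (((p.1 : Fin n) : ℕ) : ℝ))
        = ∑ p ∈ ((Finset.range k) ×ˢ (Finset.range k)).filter
            (fun p => p.1 < p.2 ∧ ℓ p.1 < ℓ p.2),
            (1:ℝ)/(((E p.2 : Fin n) : ℕ) - (((E p.1 : Fin n) : ℕ) : ℝ)) := by
      symm
      refine Finset.sum_nbij' (i := fun q : ℕ × ℕ => ((E q.1, E q.2) : Fin n × Fin n))
        (j := fun p : Fin n × Fin n =>
          ((if h : p.1 ∈ D then ((σ.symm ⟨p.1, h⟩ : Fin k) : ℕ) else 0,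
            if h : p.2 ∈ D then ((σ.symm ⟨p.2, h⟩ : Fin k) : ℕ) else 0) : ℕ × ℕ))
        ?_ ?_ ?_ ?_ ?_
      · -- maps into
        rintro q hq
        simp only [Finset.mem_filter, Finset.mem_product, Finset.mem_range] at hq
        obtain ⟨⟨hq1, hq2⟩, hqlt, hqsep⟩ := hq
        simp only [Finset.mem_filter, Finset.mem_product, Finset.mem_univ, true_and]
        refine ⟨hEmono _ _ hqlt hq2, ?_⟩
        obtain ⟨a, ha⟩ := Option.isSome_iff_exists.mp (hsome q.1 (lt_trans hqlt hq2))
        obtain ⟨b, hb⟩ := Option.isSome_iff_exists.mp (hsome q.2 hq2)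
        refine ⟨a, b, ha, hb, ?_⟩
        rw [Fin.lt_def]
        rw [← hval q.1 a ha, ← hval q.2 b hb]
        exact hqsep
      · rintro p hp
        simp only [Finset.mem_filter, Finset.mem_product, Finset.mem_univ, true_and] at hp
        obtain ⟨hplt, a, b, ha, hb, hab⟩ := hp
        have h1 : p.1 ∈ D := by
          simp only [hD, Finset.mem_filter, Finset.mem_univ, true_and, ha, Option.isSome_some]
        have h2 : p.2 ∈ D := by
          simp only [hD, Finset.mem_filter, Finset.mem_univ, true_and, hb, Option.isSome_some]
        simp only [Finset.mem_filter, Finset.mem_product, Finset.mem_range, dif_pos h1, dif_pos h2]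
        have hE1 : E ((σ.symm ⟨p.1, h1⟩ : Fin k) : ℕ) = p.1 := by
          simp only [hE, dif_pos (σ.symm ⟨p.1, h1⟩).isLt]
          have : (⟨((σ.symm ⟨p.1, h1⟩ : Fin k) : ℕ), (σ.symm ⟨p.1, h1⟩).isLt⟩ : Fin k)
              = σ.symm ⟨p.1, h1⟩ := Fin.ext rfl
          rw [this, OrderIso.apply_symm_apply]
        have hE2 : E ((σ.symm ⟨p.2, h2⟩ : Fin k) : ℕ) = p.2 := by
          simp only [hE, dif_pos (σ.symm ⟨p.2, h2⟩).isLt]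
          have : (⟨((σ.symm ⟨p.2, h2⟩ : Fin k) : ℕ), (σ.symm ⟨p.2, h2⟩).isLt⟩ : Fin k)
              = σ.symm ⟨p.2, h2⟩ := Fin.ext rfl
          rw [this, OrderIso.apply_symm_apply]
        refine ⟨⟨(σ.symm ⟨p.1, h1⟩).isLt, (σ.symm ⟨p.2, h2⟩).isLt⟩, ?_, ?_⟩
        · -- index order
          have hsub : (⟨p.1, h1⟩ : {x // x ∈ D}) < ⟨p.2, h2⟩ := by
            rw [Subtype.mk_lt_mk]; exact hplt
          have := σ.symm.lt_iff_lt.mpr hsub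
          exact this
        · have hv1 : ℓ ((σ.symm ⟨p.1, h1⟩ : Fin k) : ℕ) = (a : ℕ) := by
            apply hval; rw [hE1]; exact ha
          have hv2 : ℓ ((σ.symm ⟨p.2, h2⟩ : Fin k) : ℕ) = (b : ℕ) := by
            apply hval; rw [hE2]; exact hb
          rw [hv1, hv2]
          exact Fin.lt_def.mp hab
      · -- left inverse
        rintro q hq
        simp only [Finset.mem_filter, Finset.mem_product, Finset.mem_range] at hq
        obtain ⟨⟨hq1, hq2⟩, hqlt, -⟩ := hq
        have h1 := hED q.1 hq1
        have h2 := hED q.2 hq2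
        simp only [dif_pos h1, dif_pos h2]
        have e1 : ((σ.symm ⟨E q.1, h1⟩ : Fin k) : ℕ) = q.1 := by
          have : (⟨E q.1, h1⟩ : {x // x ∈ D}) = σ ⟨q.1, hq1⟩ := by
            apply Subtype.ext
            simp only [hE, dif_pos hq1]
          rw [this, OrderIso.symm_apply_apply]
        have e2 : ((σ.symm ⟨E q.2, h2⟩ : Fin k) : ℕ) = q.2 := by
          have : (⟨E q.2, h2⟩ : {x // x ∈ D}) = σ ⟨q.2, hq2⟩ := by
            apply Subtype.ext
            simp only [hE, dif_pos hq2]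
          rw [this, OrderIso.symm_apply_apply]
        exact Prod.ext e1 e2
      · -- right inverse
        rintro p hp
        simp only [Finset.mem_filter, Finset.mem_product, Finset.mem_univ, true_and] at hp
        obtain ⟨hplt, a, b, ha, hb, hab⟩ := hp
        have h1 : p.1 ∈ D := by
          simp only [hD, Finset.mem_filter, Finset.mem_univ, true_and, ha, Option.isSome_some]
        have h2 : p.2 ∈ D := by
          simp only [hD, Finset.mem_filter, Finset.mem_univ, true_and, hb, Option.isSome_some]
        simp only [dif_pos h1, dif_pos h2]
        have hE1 : E ((σ.symm ⟨p.1, h1⟩ : Fin k) : ℕ) = p.1 := by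
          simp only [hE, dif_pos (σ.symm ⟨p.1, h1⟩).isLt]
          have : (⟨((σ.symm ⟨p.1, h1⟩ : Fin k) : ℕ), (σ.symm ⟨p.1, h1⟩).isLt⟩ : Fin k)
              = σ.symm ⟨p.1, h1⟩ := Fin.ext rfl
          rw [this, OrderIso.apply_symm_apply]
        have hE2 : E ((σ.symm ⟨p.2, h2⟩ : Fin k) : ℕ) = p.2 := by
          simp only [hE, dif_pos (σ.symm ⟨p.2, h2⟩).isLt]
          have : (⟨((σ.symm ⟨p.2, h2⟩ : Fin k) : ℕ), (σ.symm ⟨p.2, h2⟩).isLt⟩ : Fin k)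
              = σ.symm ⟨p.2, h2⟩ := Fin.ext rfl
          rw [this, OrderIso.apply_symm_apply]
        exact Prod.ext hE1 hE2
      · intro q hq
        rfl
    rw [hbij]
    have hterm : ∀ p ∈ ((Finset.range k) ×ˢ (Finset.range k)).filter
          (fun p => p.1 < p.2 ∧ ℓ p.1 < ℓ p.2),
        (1:ℝ)/(((E p.2 : Fin n) : ℕ) - (((E p.1 : Fin n) : ℕ) : ℝ))
          ≤ (1:ℝ)/((p.2:ℝ) - (p.1:ℝ)) := by
      intro p hp
      simp only [Finset.mem_filter, Finset.mem_product, Finset.mem_range] at hp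
      obtain ⟨⟨hp1, hp2⟩, hlt12, -⟩ := hp
      have hgmono : ∀ a b, a < b → b < k → ((E a : Fin n) : ℕ) < ((E b : Fin n) : ℕ) :=
        fun a b hab hbk => Fin.lt_def.mp (hEmono a b hab hbk)
      have hdiff := FLT_mono_diff k (fun i => ((E i : Fin n) : ℕ)) hgmono p.1 p.2 hlt12 hp2
      have hElt : ((E p.1 : Fin n) : ℕ) < ((E p.2 : Fin n) : ℕ) := hgmono _ _ hlt12 hp2
      have h1 : (0:ℝ) < (p.2:ℝ) - (p.1:ℝ) := by
        have : (p.1:ℝ) < (p.2:ℝ) := by exact_mod_cast hlt12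
        linarith
      apply one_div_le_one_div_of_le h1
      have h2 : ((p.2 - p.1 : ℕ) : ℝ) ≤ ((((E p.2 : Fin n) : ℕ) - ((E p.1 : Fin n) : ℕ) : ℕ) : ℝ) := by
        exact_mod_cast hdiff
      rw [Nat.cast_sub (le_of_lt hlt12), Nat.cast_sub (le_of_lt hElt)] at h2
      exact h2
    refine le_trans (Finset.sum_le_sum hterm) ?_
    rw [FLT_sum_pairs k (fun i j => ℓ i < ℓ j) (fun i j => (1:ℝ)/((j:ℝ) - (i:ℝ)))]
    exact FLT_keyG t k (by omega) ℓ hℓmono hℓlt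

/-- for every `t ≥ 2` the fractional local `t`-dimension of the `n`-chain
is at least `ln n / (ln t + 1/2) − C_t`; in particular one may take
`C_t = (2 − 2γ)/(2 ln t + 1)` with `γ` Euler's constant. -/
theorem fltdim_chain_lower (t : ℕ) (ht : 2 ≤ t) :
    (∃ C : ℝ, ∀ n : ℕ, 1 ≤ n →
      Real.log n / (Real.log t + 1 / 2) - C ≤ fltdim t (Fin n)) ∧
    ∀ n : ℕ, 1 ≤ n →
      Real.log n / (Real.log t + 1 / 2) -
          (2 - 2 * Real.eulerMascheroniConstant) / (2 * Real.log t + 1) ≤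
        fltdim t (Fin n) := by
  have key : ∀ n : ℕ, 1 ≤ n →
      Real.log n / (Real.log t + 1 / 2) -
          (2 - 2 * Real.eulerMascheroniConstant) / (2 * Real.log t + 1) ≤
        fltdim t (Fin n) := by
    intro n hn
    have ht1 : (1:ℝ) < t := by exact_mod_cast (by omega : 1 < t)
    have hlogt : 0 < Real.log t := Real.log_pos ht1
    have hβ : 0 < Real.log t + 1/2 := by linarith
    rw [fltdim]
    apply le_csInf
    · -- nonemptiness
      refine ⟨∑ f : Fin n → Option (Fin t), (if MonotonePartial f then (1:ℝ) else 0),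
        (fun f => if MonotonePartial f then (1:ℝ) else 0), fun f => ?_, fun f hf => ?_,
        ?_, ?_⟩
      · by_cases h : MonotonePartial f <;> simp [h]
      · simp [hf]
      · intro x y hxy
        have hxy' : x < y := not_le.mp hxy
        have hne : y ≠ x := (ne_of_lt hxy').symm
        set f₀ : Fin n → Option (Fin t) := fun z =>
          if z = x then some ⟨0, by omega⟩ else if z = y then some ⟨1, by omega⟩ else none
          with hf₀
        have hfx : f₀ x = some ⟨0, by omega⟩ := by simp [hf₀]
        have hfy : f₀ y = some ⟨1, by omega⟩ := by simp [hf₀, hne]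
        have hfz : ∀ z : Fin n, z ≠ x → z ≠ y → f₀ z = none := by
          intro z hz1 hz2
          simp [hf₀, hz1, hz2]
        have hmono : MonotonePartial f₀ := by
          intro z z' hzz' a b ha hb
          by_cases h1 : z = x
          · have ha' : a = ⟨0, by omega⟩ := by
              rw [h1, hfx] at ha
              exact (Option.some_inj.mp ha).symm
            rw [ha', Fin.le_def]
            simp
          · by_cases h2 : z = y
            · have ha' : a = ⟨1, by omega⟩ := by
                rw [h2, hfy] at ha
                exact (Option.some_inj.mp ha).symm
              by_cases h3 : z' = x
              · exfalso
                rw [h2, h3] at hzz'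
                exact absurd (lt_of_lt_of_le hxy' hzz') (lt_irrefl _)
              · by_cases h4 : z' = y
                · have hb' : b = ⟨1, by omega⟩ := by
                    rw [h4, hfy] at hb
                    exact (Option.some_inj.mp hb).symm
                  rw [ha', hb']
                · exfalso
                  rw [hfz z' h3 h4] at hb
                  cases hb
            · exfalso
              rw [hfz z h1 h2] at ha
              cases ha
        have hsep : Separates f₀ x y := by
          refine ⟨⟨0, by omega⟩, ⟨1, by omega⟩, hfx, hfy, ?_⟩
          rw [Fin.lt_def]
          simp
        have hterm : (if Separates f₀ x y then (if MonotonePartial f₀ then (1:ℝ) else 0) else 0)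
            = 1 := by
          rw [if_pos hsep, if_pos hmono]
        calc (1:ℝ) = _ := hterm.symm
          _ ≤ ∑ f : Fin n → Option (Fin t),
              (if Separates f x y then (if MonotonePartial f then (1:ℝ) else 0) else 0) := by
            apply Finset.single_le_sum (f := fun f : Fin n → Option (Fin t) =>
              (if Separates f x y then (if MonotonePartial f then (1:ℝ) else 0) else 0))
            · intro g _
              by_cases h1 : Separates g x y <;> by_cases h2 : MonotonePartial g <;>
                simp [h1, h2]
            · exact Finset.mem_univ f₀
      · intro x
        apply Finset.sum_le_sum
        intro g _
        by_cases h1 : (g x).isSome <;> by_cases h2 : MonotonePartial g <;> simp [h1, h2]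
    · rintro s ⟨w, hw0, hwm, hwsep, hwmax⟩
      -- Step 1
      have hstep1 : ∑ f : Fin n → Option (Fin t),
          ((Finset.univ.filter fun x => (f x).isSome).card : ℝ) * w f ≤ n * s := by
        have h1 : ∀ f : Fin n → Option (Fin t),
            ((Finset.univ.filter fun x => (f x).isSome).card : ℝ) * w f
              = ∑ x : Fin n, (if (f x).isSome then w f else 0) := by
          intro f
          rw [← Finset.sum_filter, Finset.sum_const, nsmul_eq_mul]
        calc ∑ f : Fin n → Option (Fin t),
              ((Finset.univ.filter fun x => (f x).isSome).card : ℝ) * w f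
            = ∑ f : Fin n → Option (Fin t), ∑ x : Fin n, (if (f x).isSome then w f else 0) :=
              Finset.sum_congr rfl fun f _ => h1 f
          _ = ∑ x : Fin n, ∑ f : Fin n → Option (Fin t), (if (f x).isSome then w f else 0) :=
              Finset.sum_comm
          _ ≤ ∑ _x : Fin n, s := Finset.sum_le_sum fun x _ => hwmax x
          _ = n * s := by
              rw [Finset.sum_const, Finset.card_univ, Fintype.card_fin, nsmul_eq_mul]
      set PP := ((Finset.univ : Finset (Fin n)) ×ˢ Finset.univ).filter
        (fun p : Fin n × Fin n => p.1 < p.2) with hPP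
      -- value of the total pair sum
      have hA : ∑ p ∈ PP, (1:ℝ)/(((p.2 : Fin n) : ℕ) - (((p.1 : Fin n) : ℕ) : ℝ))
          = n * (harmonic n : ℝ) - n := by
        rw [hPP, Finset.sum_filter, Finset.sum_product]
        have step1 : ∀ x : Fin n,
            (∑ y : Fin n, if x < y then
                (1:ℝ)/(((y : Fin n) : ℕ) - (((x : Fin n) : ℕ) : ℝ)) else 0)
              = ∑ j ∈ Finset.range n, (if ((x:ℕ) < j) then (1:ℝ)/((j:ℝ) - ((x:ℕ):ℝ)) else 0) := by
          intro x
          rw [← Fin.sum_univ_eq_sum_range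
            (fun j => if ((x:ℕ) < j) then (1:ℝ)/((j:ℝ) - ((x:ℕ):ℝ)) else 0) n]
          refine Finset.sum_congr rfl fun y _ => ?_
          exact if_congr Fin.lt_def rfl rfl
        rw [Finset.sum_congr rfl (fun x _ => step1 x)]
        rw [Fin.sum_univ_eq_sum_range
          (fun i => ∑ j ∈ Finset.range n, (if (i < j) then (1:ℝ)/((j:ℝ) - (i:ℝ)) else 0)) n]
        rw [Finset.sum_comm]
        have step2 : ∀ j ∈ Finset.range n,
            (∑ i ∈ Finset.range n, if (i < j) then (1:ℝ)/((j:ℝ) - (i:ℝ)) else 0)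
              = (harmonic j : ℝ) := by
          intro j hj
          rw [FLT_range_ite_sum n j (le_of_lt (Finset.mem_range.mp hj))]
          exact FLT_hsum_eq j
        rw [Finset.sum_congr rfl step2]
        exact FLT_sum_harmonic n
      -- chain of inequalities
      have hchain : ∑ p ∈ PP, (1:ℝ)/(((p.2 : Fin n) : ℕ) - (((p.1 : Fin n) : ℕ) : ℝ))
          ≤ (Real.log t + 1/2) * (n * s) := by
        have hstepA : ∀ p ∈ PP,
            (1:ℝ)/(((p.2 : Fin n) : ℕ) - (((p.1 : Fin n) : ℕ) : ℝ))
              ≤ (∑ f : Fin n → Option (Fin t), (if Separates f p.1 p.2 then w f else 0))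
                * ((1:ℝ)/(((p.2 : Fin n) : ℕ) - (((p.1 : Fin n) : ℕ) : ℝ))) := by
          intro p hp
          have hp' : p.1 < p.2 := (Finset.mem_filter.mp hp).2
          have hlenpos : (0:ℝ) < (((p.2 : Fin n) : ℕ) : ℝ) - (((p.1 : Fin n) : ℕ) : ℝ) := by
            have : ((p.1 : Fin n) : ℕ) < ((p.2 : Fin n) : ℕ) := Fin.lt_def.mp hp'
            have h2 : ((((p.1 : Fin n) : ℕ)) : ℝ) < (((p.2 : Fin n) : ℕ) : ℝ) := by
              exact_mod_cast this
            linarith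
          have hge := hwsep p.1 p.2 (not_le.mpr hp')
          exact le_mul_of_one_le_left (le_of_lt (by positivity)) hge
        refine le_trans (Finset.sum_le_sum hstepA) ?_
        have hswap : ∑ p ∈ PP,
            (∑ f : Fin n → Option (Fin t), (if Separates f p.1 p.2 then w f else 0))
              * ((1:ℝ)/(((p.2 : Fin n) : ℕ) - (((p.1 : Fin n) : ℕ) : ℝ)))
            = ∑ f : Fin n → Option (Fin t), w f *
                (∑ p ∈ PP.filter (fun p => Separates f p.1 p.2),
                  (1:ℝ)/(((p.2 : Fin n) : ℕ) - (((p.1 : Fin n) : ℕ) : ℝ))) := by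
          calc ∑ p ∈ PP, _
              = ∑ p ∈ PP, ∑ f : Fin n → Option (Fin t),
                  (if Separates f p.1 p.2 then w f else 0)
                    * ((1:ℝ)/(((p.2 : Fin n) : ℕ) - (((p.1 : Fin n) : ℕ) : ℝ))) :=
                Finset.sum_congr rfl fun p _ => Finset.sum_mul _ _ _
            _ = ∑ f : Fin n → Option (Fin t), ∑ p ∈ PP,
                  (if Separates f p.1 p.2 then w f else 0)
                    * ((1:ℝ)/(((p.2 : Fin n) : ℕ) - (((p.1 : Fin n) : ℕ) : ℝ))) :=
                Finset.sum_comm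
            _ = _ := by
                refine Finset.sum_congr rfl fun f _ => ?_
                simp_rw [ite_mul, zero_mul]
                exact (Finset.sum_filter _ _).symm.trans (Finset.mul_sum _ _ _).symm
        rw [hswap]
        have hper : ∀ f : Fin n → Option (Fin t), w f *
              (∑ p ∈ PP.filter (fun p => Separates f p.1 p.2),
                (1:ℝ)/(((p.2 : Fin n) : ℕ) - (((p.1 : Fin n) : ℕ) : ℝ)))
            ≤ w f * (((Finset.univ.filter fun x => (f x).isSome).card : ℝ)
                * (Real.log t + 1/2)) := by
          intro f
          by_cases hmf : MonotonePartial f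
          · apply mul_le_mul_of_nonneg_left _ (hw0 f)
            have hff : PP.filter (fun p => Separates f p.1 p.2)
                = ((Finset.univ : Finset (Fin n)) ×ˢ Finset.univ).filter
                    (fun p => p.1 < p.2 ∧ Separates f p.1 p.2) := by
              rw [hPP, Finset.filter_filter]
            rw [hff]
            exact FLT_sepSum_le n t ht f hmf
          · rw [hwm f hmf]
            simp
        refine le_trans (Finset.sum_le_sum (fun f _ => hper f)) ?_
        have : ∑ f : Fin n → Option (Fin t),
            w f * (((Finset.univ.filter fun x => (f x).isSome).card : ℝ) * (Real.log t + 1/2))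
            = (Real.log t + 1/2) * ∑ f : Fin n → Option (Fin t),
                ((Finset.univ.filter fun x => (f x).isSome).card : ℝ) * w f := by
          rw [Finset.mul_sum]
          exact Finset.sum_congr rfl fun f _ => by ring
        rw [this]
        exact mul_le_mul_of_nonneg_left hstep1 (le_of_lt hβ)
      rw [hA] at hchain
      -- final arithmetic
      have hγ := FLT_gamma_lt n hn
      have hn0 : (0:ℝ) < n := by exact_mod_cast hn
      have h6 : (harmonic n : ℝ) - 1 ≤ (Real.log t + 1/2) * s := by
        have h7 : (n:ℝ) * ((harmonic n : ℝ) - 1) ≤ (n:ℝ) * ((Real.log t + 1/2) * s) := by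
          calc (n:ℝ) * ((harmonic n : ℝ) - 1) = n * (harmonic n : ℝ) - n := by ring
            _ ≤ (Real.log t + 1/2) * (n * s) := hchain
            _ = (n:ℝ) * ((Real.log t + 1/2) * s) := by ring
        exact le_of_mul_le_mul_left h7 hn0
      have hne1 : Real.log t + 1/2 ≠ 0 := ne_of_gt hβ
      have hne2 : 2 * Real.log t + 1 ≠ 0 := by positivity
      have hrw : Real.log n / (Real.log t + 1/2)
          - (2 - 2 * Real.eulerMascheroniConstant) / (2 * Real.log t + 1)
          = (Real.log n - 1 + Real.eulerMascheroniConstant) / (Real.log t + 1/2) := by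
        field_simp
        ring
      rw [hrw, div_le_iff₀ hβ]
      nlinarith [hγ, h6]
  exact ⟨⟨(2 - 2 * Real.eulerMascheroniConstant) / (2 * Real.log t + 1), key⟩, key⟩
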